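/- With G, C1, C2, α_1, α_2 as in the context (in particular G has no universal vertex), if α_1 = α_2 = 1 and |C1| ≥ 3 and |C2| ≥ 3, then G has a 3-tuple dominating set and γ×3(G) = 6. -/

import Mathlib

open Set

/-- The closed neighborhood `N[v]` of a vertex `v`: `v` together with its neighbors. -/
def closedNbhd {V : Type*} (G : SimpleGraph V) (v : V) : Set V :=
  insert v {w | G.Adj v w}

/-- `D` is a `k`-tuple dominating set of `G`: every vertex has at least `k` members of `D`
in its closed neighborhood. -/
def IsKTupleDomSet {V : Type*} (G : SimpleGraph V) (k : ℕ) (D : Set V) : Prop :=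
  ∀ v : V, k ≤ (closedNbhd G v ∩ D).ncard

/-- `γ×k(G)`: the minimum cardinality of a `k`-tuple dominating set of `G`. -/
noncomputable def gammaTuple {V : Type*} (G : SimpleGraph V) (k : ℕ) : ℕ :=
  sInf {n | ∃ D : Set V, IsKTupleDomSet G k D ∧ D.ncard = n}

/-- A vertex is universal if its closed neighborhood is the whole vertex set. -/
def IsUniversalVertex {V : Type*} (G : SimpleGraph V) (u : V) : Prop :=
  closedNbhd G u = Set.univ

/-- The non-neighbor set `N̄(v) = V \ N[v]`. -/
def nonNbhd {V : Type*} (G : SimpleGraph V) (v : V) : Set V :=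
  (closedNbhd G v)ᶜ

/-- `S` is a stable set of the auxiliary interval graph `H_i`: the non-neighbor sets of the
vertices of `S` are pairwise disjoint. -/
def IsC0PStable {V : Type*} (G : SimpleGraph V) (S : Set V) : Prop :=
  S.Pairwise fun u w => Disjoint (nonNbhd G u) (nonNbhd G w)

lemma nonNbhd_nonempty {V : Type*} (G : SimpleGraph V) (hnouniv : ∀ v : V, ¬ IsUniversalVertex G v)
    (v : V) : (nonNbhd G v).Nonempty := by
  rw [nonNbhd, Set.nonempty_compl]
  exact hnouniv v

lemma nonNbhd_subset {V : Type*} (G : SimpleGraph V) {C1 C2 : Set V}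
    (hunion : C1 ∪ C2 = Set.univ) (hcl1 : G.IsClique C1) {v : V} (hv : v ∈ C1) :
    nonNbhd G v ⊆ C2 := by
  intro w hw
  have hw' : w ∉ closedNbhd G v := hw
  rcases (hunion ▸ Set.mem_univ w : w ∈ C1 ∪ C2) with h | h
  · exfalso
    rcases eq_or_ne w v with rfl | hne
    · exact hw' (Set.mem_insert _ _)
    · exact hw' (Set.mem_insert_of_mem _ (hcl1 hv h (Ne.symm hne)))
  · exact h

/-- If α₁ = 1, there is a vertex of `C2` nonadjacent to every vertex of `C1`. -/
lemma exists_common {V : Type*} [Fintype V] [LinearOrder V] (G : SimpleGraph V) (C1 C2 : Set V)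
    (hunion : C1 ∪ C2 = Set.univ) (hne1 : C1.Nonempty) (hcl1 : G.IsClique C1)
    (hnouniv : ∀ v : V, ¬ IsUniversalVertex G v)
    (hint1 : ∀ v ∈ C1, (nonNbhd G v).Nonempty ∧
      ∀ a ∈ C2, ∀ b ∈ C2, ∀ c ∈ C2, a ≤ b → b ≤ c →
        a ∈ nonNbhd G v → c ∈ nonNbhd G v → b ∈ nonNbhd G v)
    (hα1 : ∀ n ∈ {n | ∃ S : Set V, S ⊆ C1 ∧ IsC0PStable G S ∧ S.ncard = n}, n ≤ 1) :
    ∃ y ∈ C2, ∀ v ∈ C1, y ∈ nonNbhd G v := by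
  classical
  -- max of each non-neighbor set
  have hfin : ∀ v : V, (nonNbhd G v).Finite := fun v => Set.toFinite _
  have hnonem : ∀ v : V, ((hfin v).toFinset).Nonempty := fun v => by
    rw [Set.Finite.toFinset_nonempty]; exact nonNbhd_nonempty G hnouniv v
  set g : V → V := fun v => ((hfin v).toFinset).max' (hnonem v) with hg
  have hgmem : ∀ v : V, g v ∈ nonNbhd G v := fun v => by
    have := Finset.max'_mem _ (hnonem v)
    rwa [Set.Finite.mem_toFinset] at this
  have hgle : ∀ v : V, ∀ z ∈ nonNbhd G v, z ≤ g v := fun v z hz =>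
    Finset.le_max' _ z ((Set.Finite.mem_toFinset _).2 hz)
  -- pick v0 minimizing g over C1
  have hC1fin : C1.Finite := Set.toFinite _
  have hC1ne : hC1fin.toFinset.Nonempty := by
    rw [Set.Finite.toFinset_nonempty]; exact hne1
  obtain ⟨v0, hv0mem, hv0min⟩ := hC1fin.toFinset.exists_min_image g hC1ne
  rw [Set.Finite.mem_toFinset] at hv0mem
  refine ⟨g v0, nonNbhd_subset G hunion hcl1 hv0mem (hgmem v0), ?_⟩
  intro v hv
  rcases eq_or_ne v v0 with rfl | hne
  · exact hgmem v
  -- non-disjointness from α₁ = 1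
  have hnd : ¬ Disjoint (nonNbhd G v) (nonNbhd G v0) := by
    intro hdis
    have hst : IsC0PStable G {v, v0} := by
      rw [IsC0PStable, Set.pairwise_pair]
      exact fun _ => ⟨hdis, hdis.symm⟩
    have : ({v, v0} : Set V).ncard ≤ 1 :=
      hα1 _ ⟨{v, v0}, by rintro x (rfl | rfl) <;> assumption, hst, rfl⟩
    rw [Set.ncard_pair hne] at this
    omega
  obtain ⟨z, hz1, hz2⟩ := Set.not_disjoint_iff.1 hnd
  have hzle : z ≤ g v0 := hgle v0 z hz2
  have hle2 : g v0 ≤ g v := hv0min v ((Set.Finite.mem_toFinset _).2 hv)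
  exact (hint1 v hv).2 z (nonNbhd_subset G hunion hcl1 hv hz1)
    (g v0) (nonNbhd_subset G hunion hcl1 hv0mem (hgmem v0))
    (g v) (nonNbhd_subset G hunion hcl1 hv (hgmem v))
    hzle hle2 hz1 (hgmem v)

lemma clique_subset_closedNbhd {V : Type*} (G : SimpleGraph V) {C1 : Set V}
    (hcl1 : G.IsClique C1) {v : V} (hv : v ∈ C1) : C1 ⊆ closedNbhd G v := by
  intro w hw
  rcases eq_or_ne w v with rfl | hne
  · exact Set.mem_insert _ _
  · exact Set.mem_insert_of_mem _ (hcl1 hv hw (Ne.symm hne))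

lemma closedNbhd_subset {V : Type*} (G : SimpleGraph V) {C1 C2 : Set V}
    (hunion : C1 ∪ C2 = Set.univ) {y : V} (hy : ∀ v ∈ C1, y ∈ nonNbhd G v) :
    closedNbhd G y ⊆ C2 := by
  intro w hw
  rcases (hunion ▸ Set.mem_univ w : w ∈ C1 ∪ C2) with h | h
  · exfalso
    have hy' : y ∉ closedNbhd G w := hy w h
    rcases hw with rfl | hadj
    · exact hy' (Set.mem_insert _ _)
    · exact hy' (Set.mem_insert_of_mem _ (G.adj_symm hadj))
  · exact h

/-- in a C0P-graph with no universal vertices, if `α1 = α2 = 1`, `|C1| ≥ 3` and `|C2| ≥ 3`, then `G` has a `3`-tuple dominating set and `γ×3(G) = 6`. -/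
theorem stmt14 {V : Type*} [Fintype V] [LinearOrder V] (G : SimpleGraph V) (C1 C2 : Set V)
    (hd12 : Disjoint C1 C2) (hunion : C1 ∪ C2 = Set.univ)
    (hne1 : C1.Nonempty) (hne2 : C2.Nonempty)
    (hcl1 : G.IsClique C1) (hcl2 : G.IsClique C2)
    (hnouniv : ∀ v : V, ¬ IsUniversalVertex G v)
    (hint1 : ∀ v ∈ C1, (nonNbhd G v).Nonempty ∧
      ∀ a ∈ C2, ∀ b ∈ C2, ∀ c ∈ C2, a ≤ b → b ≤ c →
        a ∈ nonNbhd G v → c ∈ nonNbhd G v → b ∈ nonNbhd G v)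
    (hint2 : ∀ v ∈ C2, (nonNbhd G v).Nonempty ∧
      ∀ a ∈ C1, ∀ b ∈ C1, ∀ c ∈ C1, a ≤ b → b ≤ c →
        a ∈ nonNbhd G v → c ∈ nonNbhd G v → b ∈ nonNbhd G v)
    (α1 α2 : ℕ)
    (hα1 : IsGreatest {n | ∃ S : Set V, S ⊆ C1 ∧ IsC0PStable G S ∧ S.ncard = n} α1)
    (hα2 : IsGreatest {n | ∃ S : Set V, S ⊆ C2 ∧ IsC0PStable G S ∧ S.ncard = n} α2)
    (h1 : α1 = 1) (h2 : α2 = 1) (hc1 : 3 ≤ C1.ncard) (hc2 : 3 ≤ C2.ncard) :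
    (∃ D : Set V, IsKTupleDomSet G 3 D) ∧ gammaTuple G 3 = 6 := by
  classical
  subst h1 h2
  -- upper bound: three vertices from each clique
  obtain ⟨A, hA, hAcard⟩ := Set.exists_subset_card_eq hc1
  obtain ⟨B, hB, hBcard⟩ := Set.exists_subset_card_eq hc2
  have hABdis : Disjoint A B := hd12.mono hA hB
  have hdom : IsKTupleDomSet G 3 (A ∪ B) := by
    intro v
    rcases (hunion ▸ Set.mem_univ v : v ∈ C1 ∪ C2) with h | h
    · have hsub : A ⊆ closedNbhd G v ∩ (A ∪ B) := fun a ha =>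
        ⟨clique_subset_closedNbhd G hcl1 h (hA ha), Or.inl ha⟩
      calc 3 = A.ncard := hAcard.symm
        _ ≤ _ := Set.ncard_le_ncard hsub (Set.toFinite _)
    · have hsub : B ⊆ closedNbhd G v ∩ (A ∪ B) := fun b hb =>
        ⟨clique_subset_closedNbhd G hcl2 h (hB hb), Or.inr hb⟩
      calc 3 = B.ncard := hBcard.symm
        _ ≤ _ := Set.ncard_le_ncard hsub (Set.toFinite _)
  have hcard : (A ∪ B).ncard = 6 := by
    rw [Set.ncard_union_eq hABdis, hAcard, hBcard]
  -- lower bound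
  have hlow : ∀ n ∈ {n | ∃ D : Set V, IsKTupleDomSet G 3 D ∧ D.ncard = n}, 6 ≤ n := by
    rintro n ⟨D, hD, rfl⟩
    obtain ⟨y, hyC2, hy⟩ := exists_common G C1 C2 hunion hne1 hcl1 hnouniv hint1 hα1.2
    obtain ⟨x, hxC1, hx⟩ := exists_common G C2 C1 (by rw [Set.union_comm]; exact hunion)
      hne2 hcl2 hnouniv hint2 hα2.2
    have h2' : 3 ≤ (C2 ∩ D).ncard := by
      calc 3 ≤ (closedNbhd G y ∩ D).ncard := hD y
        _ ≤ _ := Set.ncard_le_ncard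
          (Set.inter_subset_inter_left D (closedNbhd_subset G hunion hy)) (Set.toFinite _)
    have h1' : 3 ≤ (C1 ∩ D).ncard := by
      calc 3 ≤ (closedNbhd G x ∩ D).ncard := hD x
        _ ≤ _ := Set.ncard_le_ncard
          (Set.inter_subset_inter_left D
            (closedNbhd_subset G (by rw [Set.union_comm]; exact hunion) hx)) (Set.toFinite _)
    have hsplit : D.ncard = (C1 ∩ D).ncard + (C2 ∩ D).ncard := by
      rw [← Set.ncard_union_eq (hd12.mono Set.inter_subset_left Set.inter_subset_left)]
      congr 1
      rw [← Set.union_inter_distrib_right, hunion, Set.univ_inter]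
    omega
  refine ⟨⟨A ∪ B, hdom⟩, le_antisymm (Nat.sInf_le ⟨A ∪ B, hdom, hcard⟩) (le_csInf ⟨6, A ∪ B, hdom, hcard⟩ hlow)⟩
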